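/- Let u ∈ L²(ℝ) with u ≠ 0, let s > 0, and let c : ℤ → ℂ be a finitely supported sequence belonging to ℓ²_O(ℤ), i.e. there exists no α ∈ ℝ such that c_k ∈ e^{iα}·ℝ for all k. Then the functions f = Σ_{k∈ℤ} c_k T_{sk} u and f_× = Σ_{k∈ℤ} conj(c_k) T_{sk} u do not agree up to a global phase: there is no ν ∈ ℂ with |ν| = 1 and f = ν·f_×. -/

import Mathlib

open MeasureTheory Complex Real Filter Polynomial

/-- The short-time Fourier transform of `f ∈ L²(ℝ)` with respect to the window `g ∈ L²(ℝ)`: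
`V_g f (x, ω) = ∫ f(t) conj(g(t-x)) e^{-2πiωt} dt`. -/
noncomputable def STFT (g f : Lp ℂ 2 (volume : Measure ℝ)) (x ω : ℝ) : ℂ :=
  ∫ t : ℝ, f t * (starRingEnd ℂ) (g (t - x)) * Complex.exp (-2 * Real.pi * Complex.I * ω * t)

/-- `f` and `h` agree up to a global phase: `f = ν • h` for some unimodular `ν ∈ ℂ`. -/
def SamePhase (f h : Lp ℂ 2 (volume : Measure ℝ)) : Prop :=
  ∃ ν : ℂ, ‖ν‖ = 1 ∧ f = ν • h

/-- Translation operator `T_τ` on `L²(ℝ)`: `(T_τ f)(t) = f (t - τ)`. -/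
noncomputable def Translate (τ : ℝ) (f : Lp ℂ 2 (volume : Measure ℝ)) :
    Lp ℂ 2 (volume : Measure ℝ) :=
  Lp.compMeasurePreserving (fun t => t - τ) (measurePreserving_sub_right volume τ) f

/-- The values of the sequence `c : ℤ → ℂ` do not all lie on a single line through the
origin of the complex plane (the defining property of `ℓ²_𝒪(ℤ)`). -/
def NotOnLine (c : ℤ → ℂ) : Prop :=
  ¬ ∃ α : ℝ, ∀ k : ℤ, ∃ r : ℝ, c k = Complex.exp (α * Complex.I) * r

/-- Translation as a linear map. -/
noncomputable def TransL (τ : ℝ) :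
    Lp ℂ 2 (volume : Measure ℝ) →ₗ[ℂ] Lp ℂ 2 (volume : Measure ℝ) :=
  Lp.compMeasurePreservingₗ ℂ (fun t => t - τ) (measurePreserving_sub_right volume τ)

lemma TransL_apply (τ : ℝ) (f : Lp ℂ 2 (volume : Measure ℝ)) :
    TransL τ f = Translate τ f := rfl

lemma Translate_coe (τ : ℝ) (f : Lp ℂ 2 (volume : Measure ℝ)) :
    Translate τ f =ᵐ[volume] fun t => f (t - τ) :=
  Lp.coeFn_compMeasurePreserving f _

lemma Translate_comp (a b : ℝ) (f : Lp ℂ 2 (volume : Measure ℝ)) :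
    Translate a (Translate b f) = Translate (a + b) f := by
  apply Lp.ext
  have h2 : ⇑(Translate b f) =ᵐ[volume] fun t => f (t - b) := Translate_coe b f
  have h3 : (fun t : ℝ => (Translate b f) (t - a)) =ᵐ[volume] fun t => f (t - a - b) :=
    (measurePreserving_sub_right volume a).quasiMeasurePreserving.ae_eq_comp h2
  filter_upwards [Translate_coe a (Translate b f), h3, Translate_coe (a + b) f] with t h1 h3 h4
  rw [h1, h3, h4]
  ring_nf

lemma Translate_zero (f : Lp ℂ 2 (volume : Measure ℝ)) : Translate 0 f = f := by
  apply Lp.ext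
  filter_upwards [Translate_coe 0 f] with t h1
  rw [h1]; simp

lemma TransL_pow (n : ℕ) (f : Lp ℂ 2 (volume : Measure ℝ)) (s : ℝ) :
    (TransL s ^ n) f = Translate (s * n) f := by
  induction n generalizing f with
  | zero => simpa using (Translate_zero f).symm
  | succ n ih =>
    rw [pow_succ, Module.End.mul_apply, ih, TransL_apply, Translate_comp]
    norm_num; ring_nf

lemma exists_eigen {M : Type*} [AddCommGroup M] [Module ℂ M] (A : Module.End ℂ M) :
    ∀ (n : ℕ) (P : ℂ[X]), P.natDegree ≤ n → P ≠ 0 → ∀ u : M, u ≠ 0 →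
      Polynomial.aeval A P u = 0 → ∃ w : M, w ≠ 0 ∧ ∃ μ : ℂ, A w = μ • w := by
  intro n
  induction n with
  | zero =>
    intro P hdeg hP u hu hPu
    rw [Polynomial.eq_C_of_natDegree_le_zero hdeg] at hPu
    rw [Polynomial.aeval_C] at hPu
    have hc0 : P.coeff 0 ≠ 0 := by
      intro h
      exact hP (by rw [Polynomial.eq_C_of_natDegree_le_zero hdeg, h, map_zero])
    have h2 := congrArg (fun v => (P.coeff 0)⁻¹ • v) hPu
    simp only [Module.algebraMap_end_apply, smul_smul, inv_mul_cancel₀ hc0, one_smul,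
      smul_zero] at h2
    exact absurd h2 hu
  | succ n ih =>
    intro P hdeg hP u hu hPu
    by_cases h0 : P.natDegree ≤ n
    · exact ih P h0 hP u hu hPu
    have hdpos : 0 < P.natDegree := by omega
    obtain ⟨lam, hlam⟩ := Complex.exists_root (f := P) (by
      rwa [Polynomial.degree_eq_natDegree hP, Nat.cast_pos])
    obtain ⟨Q, hQ⟩ := (Polynomial.dvd_iff_isRoot.mpr hlam)
    have hQ0 : Q ≠ 0 := by rintro rfl; simp at hQ; exact hP hQ
    have hQdeg : Q.natDegree ≤ n := by
      have := Polynomial.natDegree_mul (Polynomial.X_sub_C_ne_zero lam) hQ0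
      rw [← hQ, Polynomial.natDegree_X_sub_C] at this
      omega
    set w := Polynomial.aeval A Q u with hw
    by_cases hw0 : w = 0
    · exact ih Q hQdeg hQ0 u hu hw0
    · refine ⟨w, hw0, lam, ?_⟩
      have : Polynomial.aeval A P u = A w - lam • w := by
        rw [hQ, map_mul, Module.End.mul_apply, ← hw, map_sub, Polynomial.aeval_X,
          Polynomial.aeval_C, LinearMap.sub_apply, Module.algebraMap_end_apply]
      rw [hPu] at this
      exact sub_eq_zero.mp this.symm

lemma no_eigen (s : ℝ) (hs : 0 < s) (w : Lp ℂ 2 (volume : Measure ℝ)) (hw : w ≠ 0)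
    (lam : ℂ) (h : Translate s w = lam • w) : False := by
  have hnw : ‖w‖ ≠ 0 := by simpa using hw
  have hlam : ‖lam‖ = 1 := by
    have h1 : ‖Translate s w‖ = ‖w‖ := Lp.norm_compMeasurePreserving w _
    rw [h, norm_smul] at h1
    field_simp at h1
    exact h1
  have hae : ∀ᵐ t : ℝ, w (t - s) = lam * w t := by
    have h2 : ⇑(lam • w) =ᵐ[volume] fun t => lam * w t := by
      filter_upwards [Lp.coeFn_smul lam w] with t ht
      rw [ht]; rfl
    have h1 := (Translate_coe s w).symm.trans (h.symm ▸ h2 : ⇑(Translate s w) =ᵐ[volume] fun t => lam * w t)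
    exact h1
  set q : ℝ → ℝ := fun t => ‖w t‖ ^ 2 with hq
  have hper : ∀ᵐ t : ℝ, q (t + s) = q t := by
    have hae' : (fun t : ℝ => w (t - s)) =ᵐ[volume] (fun t => lam * w t) := hae
    have h1 := (measurePreserving_add_right volume s).quasiMeasurePreserving.ae_eq_comp hae'
    filter_upwards [h1] with t ht
    have h0 : w t = lam * w (t + s) := by simpa [Function.comp] using ht
    have h2 : ‖w t‖ = ‖w (t + s)‖ := by rw [h0, norm_mul, hlam, one_mul]
    show ‖w (t + s)‖ ^ 2 = ‖w t‖ ^ 2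
    rw [h2]
  have hint : Integrable q volume := by
    have hm := Lp.memLp w
    have h2 := hm.norm_rpow (by norm_num) (by norm_num)
    rw [memLp_one_iff_integrable] at h2
    have : (fun t : ℝ => ‖w t‖ ^ (2 : ENNReal).toReal) = q := by
      funext t
      rw [hq]
      norm_num [Real.rpow_natCast]
    rwa [this] at h2
  have hshift : ∀ a b : ℝ, (∫ t in a..b, q t) = ∫ t in (a + s)..(b + s), q t := by
    intro a b
    rw [← intervalIntegral.integral_comp_add_right (fun t => q t) s]
    apply intervalIntegral.integral_congr_ae
    filter_upwards [hper] with t ht _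
    exact ht.symm
  have hshiftn : ∀ (m : ℕ) (a b : ℝ), (∫ t in a..b, q t) = ∫ t in (a + m * s)..(b + m * s), q t := by
    intro m
    induction m with
    | zero => intro a b; norm_num
    | succ m ih =>
      intro a b
      rw [ih a b, hshift]
      push_cast
      ring_nf
  set c : ℝ := ∫ t in (0:ℝ)..s, q t with hc
  have hJ : ∀ n : ℕ, (∫ t in (-(n * s))..(n * s), q t) = 2 * n * c := by
    intro n
    induction n with
    | zero => norm_num
    | succ n ih =>
      have h1 : (∫ t in (-((n+1) * s))..(-(n * s)), q t) = c := by
        have := hshiftn (n+1) (-((n+1) * s)) (-(n * s))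
        rw [this]
        rw [hc]
        norm_num
        ring_nf
      have h2 : (∫ t in ((n:ℝ) * s)..((n+1) * s), q t) = c := by
        have := hshiftn n 0 s
        rw [hc, this]
        ring_nf
      have i1 : IntervalIntegrable q volume (-((n+1) * s)) (-(n * s)) := hint.intervalIntegrable
      have i2 : IntervalIntegrable q volume (-(n * s)) ((n:ℝ) * s) := hint.intervalIntegrable
      have i3 : IntervalIntegrable q volume ((n:ℝ) * s) ((n+1) * s) := hint.intervalIntegrable
      have e1 := intervalIntegral.integral_add_adjacent_intervals i1 i2
      have e2 := intervalIntegral.integral_add_adjacent_intervals (i1.trans i2) i3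
      push_cast
      linarith [e1, e2, h1, h2, ih]
  have htend : Tendsto (fun n : ℕ => ∫ t in (-(n * s))..(n * s), q t) atTop (nhds (∫ t, q t)) := by
    apply MeasureTheory.intervalIntegral_tendsto_integral hint
    · exact tendsto_neg_atBot_iff.mpr ((tendsto_natCast_atTop_atTop).atTop_mul_const hs)
    · exact (tendsto_natCast_atTop_atTop).atTop_mul_const hs
  rw [show (fun n : ℕ => ∫ t in (-(n * s))..(n * s), q t) = fun n : ℕ => 2 * n * c from
    funext hJ] at htend
  have hc0 : c = 0 := by
    by_contra hc0
    have hbase := (tendsto_natCast_atTop_atTop (R := ℝ)).const_mul_atTop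
      (by norm_num : (0:ℝ) < 2)
    rcases lt_or_gt_of_ne hc0 with hlt | hgt
    · exact not_tendsto_atBot_of_tendsto_nhds htend (hbase.atTop_mul_const_of_neg hlt)
    · exact not_tendsto_atTop_of_tendsto_nhds htend (hbase.atTop_mul_const hgt)
  rw [hc0] at htend
  simp only [mul_zero] at htend
  have hI0 : (∫ t, q t) = 0 := (tendsto_nhds_unique tendsto_const_nhds htend).symm
  have hq0 : q =ᵐ[volume] 0 :=
    (MeasureTheory.integral_eq_zero_iff_of_nonneg (fun t => sq_nonneg _) hint).mp hI0
  apply hw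
  apply Lp.ext
  filter_upwards [hq0, Lp.coeFn_zero ℂ 2 (volume : Measure ℝ)] with t h1 h2
  rw [h2]
  have h3 : ‖w t‖ ^ 2 = 0 := h1
  have : ‖w t‖ = 0 := by
    simpa using pow_eq_zero_iff (by norm_num : 2 ≠ 0) |>.mp h3
  simpa using this

theorem stmt8 (u : Lp ℂ 2 (volume : Measure ℝ)) (hu : u ≠ 0) (s : ℝ) (hs : 0 < s)
    (c : ℤ →₀ ℂ) (hc : NotOnLine fun k => c k) :
    ¬ SamePhase (∑ k ∈ c.support, c k • Translate (s * k) u)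
      (∑ k ∈ c.support, (starRingEnd ℂ) (c k) • Translate (s * k) u) := by
  rintro ⟨ν, hν, heq⟩
  set d : ℤ → ℂ := fun j => c j - ν * (starRingEnd ℂ) (c j) with hdd
  have hrel : ∑ k ∈ c.support, d k • Translate (s * k) u = 0 := by
    have h1 : ∀ k ∈ c.support, d k • Translate (s * k) u
        = c k • Translate (s * k) u - ν • ((starRingEnd ℂ) (c k) • Translate (s * k) u) := by
      intro k _
      rw [hdd, sub_smul, smul_smul]
    rw [Finset.sum_congr rfl h1, Finset.sum_sub_distrib, ← Finset.smul_sum, ← heq, sub_self]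
  have hd : ∀ k : ℤ, c k = ν * (starRingEnd ℂ) (c k) := by
    intro k
    by_cases hk : c k = 0
    · simp [hk]
    have hks : k ∈ c.support := Finsupp.mem_support_iff.mpr hk
    by_contra hdk
    have hdk' : d k ≠ 0 := sub_ne_zero.mpr hdk
    set k0 : ℤ := c.support.min' ⟨k, hks⟩ with hk0
    have hmin : ∀ j ∈ c.support, k0 ≤ j := fun j hj => Finset.min'_le _ j hj
    have hinj : ∀ j ∈ c.support, ((j - k0).toNat : ℤ) = j - k0 := fun j hj =>
      Int.toNat_of_nonneg (by linarith [hmin j hj])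
    set P : Polynomial ℂ := ∑ j ∈ c.support, Polynomial.monomial ((j - k0).toNat) (d j) with hP
    have hcoeff : P.coeff ((k - k0).toNat) = d k := by
      rw [hP, Polynomial.finset_sum_coeff]
      rw [Finset.sum_eq_single k]
      · simp [Polynomial.coeff_monomial]
      · intro j hj hjk
        rw [Polynomial.coeff_monomial, if_neg]
        intro hEq
        apply hjk
        have h5 : ((j - k0).toNat : ℤ) = ((k - k0).toNat : ℤ) := by exact_mod_cast hEq
        rw [hinj j hj, hinj k hks] at h5
        omega
      · intro h; exact absurd hks h
    have hPne : P ≠ 0 := fun h => hdk' (by rw [← hcoeff, h, Polynomial.coeff_zero])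
    have haeval : Polynomial.aeval (TransL s) P u = 0 := by
      have hterm : ∀ j ∈ c.support,
          (Polynomial.aeval (TransL s) (Polynomial.monomial ((j - k0).toNat) (d j))) u
            = d j • Translate (-(s * k0) + s * j) u := by
        intro j hj
        rw [Polynomial.aeval_monomial, Module.End.mul_apply, TransL_pow,
          Module.algebraMap_end_apply]
        congr 2
        have h6 : (((j - k0).toNat : ℤ) : ℝ) = (j : ℝ) - (k0 : ℝ) := by
          rw [hinj j hj]; push_cast; ring
        push_cast at h6 ⊢
        rw [h6]; ring
      have hzero : TransL (-(s * k0)) (∑ j ∈ c.support, d j • Translate (s * j) u) = 0 := by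
        rw [hrel, map_zero]
      rw [map_sum] at hzero
      rw [hP, map_sum, LinearMap.sum_apply, Finset.sum_congr rfl hterm]
      rw [← hzero]
      apply Finset.sum_congr rfl
      intro j hj
      rw [_root_.map_smul, TransL_apply, Translate_comp]
    obtain ⟨w, hw0, lam, hlam⟩ :=
      exists_eigen (TransL s) P.natDegree P le_rfl hPne u hu haeval
    exact no_eigen s hs w hw0 lam (by rw [← TransL_apply]; exact hlam)
  -- contradiction with NotOnLine
  apply hc
  have habs : ‖ν‖ = 1 := hν
  have hνexp : Complex.exp ((ν.arg : ℂ) * Complex.I) = ν := by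
    conv_rhs => rw [← Complex.norm_mul_exp_arg_mul_I ν]
    rw [habs]
    simp
  refine ⟨ν.arg / 2, fun k => ?_⟩
  set α : ℝ := ν.arg / 2 with hα
  set z : ℂ := Complex.exp (-(α : ℂ) * Complex.I) * c k with hz
  have h2 : (starRingEnd ℂ) (c k) = (starRingEnd ℂ) ν * c k := by
    have h := congrArg (starRingEnd ℂ) (hd k)
    rw [map_mul, Complex.conj_conj] at h
    exact h
  have h3 : (starRingEnd ℂ) ν = Complex.exp (-(ν.arg : ℂ) * Complex.I) := by
    have h := congrArg (starRingEnd ℂ) hνexp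
    rw [← Complex.exp_conj] at h
    rw [← h]
    congr 1
    simp [Complex.conj_ofReal]
  have hconj : (starRingEnd ℂ) z = z := by
    rw [hz, map_mul, ← Complex.exp_conj]
    have h1 : (starRingEnd ℂ) (-(α : ℂ) * Complex.I) = (α : ℂ) * Complex.I := by
      simp [Complex.conj_ofReal]
    rw [h1, h2, h3, ← mul_assoc, ← Complex.exp_add]
    congr 2
    rw [hα]
    push_cast
    ring
  refine ⟨z.re, ?_⟩
  have h4 : (z.re : ℂ) = z := Complex.conj_eq_iff_re.mp hconj
  show c k = Complex.exp ((α : ℂ) * Complex.I) * (z.re : ℂ)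
  rw [h4, hz, ← mul_assoc, ← Complex.exp_add]
  norm_num
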